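/- For 0 < γ < 1, the series Σ_{q=1}^∞ q^γ · (1/q) · ∏_{p | q} 1/(p+1) converges. -/

import Mathlib

open Real Finset

noncomputable def F9 (γ : ℝ) (q : ℕ) : ℝ :=
  (q : ℝ) ^ γ * (1 / (q : ℝ)) * ∏ p ∈ q.primeFactors, (1 : ℝ) / (p + 1)

lemma F9_nonneg (γ : ℝ) (q : ℕ) : 0 ≤ F9 γ q := by
  unfold F9
  apply mul_nonneg (mul_nonneg (Real.rpow_nonneg (by positivity) _) (by positivity))
  exact Finset.prod_nonneg fun p _ => by positivity

lemma F9_zero (γ : ℝ) (h0 : 0 < γ) : F9 γ 0 = 0 := by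
  simp [F9, Real.zero_rpow h0.ne']

lemma F9_one (γ : ℝ) : F9 γ 1 = 1 := by
  simp [F9]

lemma F9_mul (γ : ℝ) (h0 : 0 < γ) {m n : ℕ} (h : Nat.Coprime m n) :
    F9 γ (m * n) = F9 γ m * F9 γ n := by
  rcases eq_or_ne m 0 with rfl | hm
  · rw [Nat.coprime_zero_left] at h; subst h; simp [F9_zero γ h0, F9_one]
  rcases eq_or_ne n 0 with rfl | hn
  · rw [Nat.coprime_zero_right] at h; subst h; simp [F9_zero γ h0, F9_one]
  unfold F9
  rw [Nat.cast_mul, Real.mul_rpow (by positivity) (by positivity),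
    Nat.primeFactors_mul hm hn, Finset.prod_union h.disjoint_primeFactors]
  field_simp

lemma F9_pp (γ : ℝ) {p : ℕ} (hp : p.Prime) (k : ℕ) :
    F9 γ (p ^ (k + 1)) = ((p : ℝ) ^ (γ - 1)) ^ (k + 1) * (1 / ((p : ℝ) + 1)) := by
  have hp0 : (0 : ℝ) < p := by exact_mod_cast hp.pos
  unfold F9
  rw [Nat.primeFactors_prime_pow (Nat.succ_ne_zero k) hp, Finset.prod_singleton]
  push_cast
  have e1 : ((p:ℝ) ^ (k+1) : ℝ) ^ γ = (p:ℝ) ^ ((k+1 : ℕ) * γ) := by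
    rw [Real.rpow_natCast_mul hp0.le]
  have e2 : ((p:ℝ) ^ (γ - 1)) ^ (k+1) = (p:ℝ) ^ ((γ - 1) * (k+1 : ℕ)) := by
    rw [Real.rpow_mul_natCast hp0.le]
  rw [e1, e2, mul_comm (γ-1) ((k+1:ℕ):ℝ), mul_sub, mul_one, Real.rpow_sub hp0, Real.rpow_natCast]
  field_simp

theorem stmt9 (γ : ℝ) (h0 : 0 < γ) (h1 : γ < 1) :
    Summable (fun q : ℕ =>
      (q : ℝ) ^ γ * (1 / (q : ℝ)) * ∏ p ∈ q.primeFactors, (1 : ℝ) / (p + 1)) := by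
  show Summable (F9 γ)
  have hγ1 : γ - 1 < 0 := by linarith
  set r2 : ℝ := (2:ℝ) ^ (γ - 1) with hr2def
  have hr2lt : r2 < 1 := Real.rpow_lt_one_of_one_lt_of_neg one_lt_two hγ1
  have hr2pos : 0 < r2 := Real.rpow_pos_of_pos two_pos _
  set C : ℝ := (1 - r2)⁻¹ with hCdef
  have hCpos : 0 < C := inv_pos.mpr (by linarith)
  -- facts about r_p := p ^ (γ-1) for primes p
  have hfacts : ∀ {p : ℕ}, p.Prime →
      0 ≤ (p:ℝ) ^ (γ-1) ∧ (p:ℝ) ^ (γ-1) ≤ r2 ∧ (p:ℝ) ^ (γ-1) < 1 := by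
    intro p hp
    have hp2 : (2:ℝ) ≤ (p:ℝ) := by exact_mod_cast hp.two_le
    refine ⟨Real.rpow_nonneg (by linarith) _,
      Real.rpow_le_rpow_of_nonpos two_pos hp2 hγ1.le,
      Real.rpow_lt_one_of_one_lt_of_neg (by linarith) hγ1⟩
  have hbound : ∀ {p : ℕ}, p.Prime → ∀ n : ℕ, ‖F9 γ (p^n)‖ ≤ ((p:ℝ) ^ (γ-1)) ^ n := by
    intro p hp n
    obtain ⟨h₁, h₂, h₃⟩ := hfacts hp
    rw [Real.norm_of_nonneg (F9_nonneg γ _)]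
    cases n with
    | zero => simp [F9_one]
    | succ k =>
      rw [F9_pp γ hp k]
      have hle : (1:ℝ) / ((p:ℝ) + 1) ≤ 1 := by
        rw [div_le_one (by positivity)]
        have : (0:ℝ) ≤ (p:ℝ) := Nat.cast_nonneg p
        linarith
      calc ((p:ℝ) ^ (γ-1)) ^ (k+1) * (1 / ((p:ℝ)+1))
          ≤ ((p:ℝ) ^ (γ-1)) ^ (k+1) * 1 := by
            apply mul_le_mul_of_nonneg_left hle (pow_nonneg h₁ _)
        _ = ((p:ℝ) ^ (γ-1)) ^ (k+1) := mul_one _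
  have hsum : ∀ {p : ℕ}, p.Prime → Summable (fun n : ℕ => ‖F9 γ (p^n)‖) := by
    intro p hp
    obtain ⟨h₁, h₂, h₃⟩ := hfacts hp
    exact Summable.of_nonneg_of_le (fun n => norm_nonneg _) (hbound hp)
      (summable_geometric_of_lt_one h₁ h₃)
  have htsum : ∀ {p : ℕ}, p.Prime → ∑' n : ℕ, F9 γ (p^n) ≤ 1 + C * (p:ℝ) ^ (γ-2) := by
    intro p hp
    obtain ⟨h₁, h₂, h₃⟩ := hfacts hp
    have hp0 : (0:ℝ) < p := by exact_mod_cast hp.pos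
    have hf : Summable (fun n : ℕ => F9 γ (p^n)) := (hsum hp).of_norm
    rw [Summable.tsum_eq_zero_add hf, pow_zero, F9_one]
    have he : ∀ n : ℕ, F9 γ (p ^ (n+1)) =
        ((p:ℝ) ^ (γ-1) * (1/((p:ℝ)+1))) * ((p:ℝ) ^ (γ-1)) ^ n := by
      intro n; rw [F9_pp γ hp n]; ring
    rw [tsum_congr he, tsum_mul_left, tsum_geometric_of_lt_one h₁ h₃]
    have hinv : (1 - (p:ℝ) ^ (γ-1))⁻¹ ≤ C := by
      rw [hCdef]
      apply inv_anti₀ (by linarith) (by linarith)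
    have hfrac : (p:ℝ) ^ (γ-1) * (1/((p:ℝ)+1)) ≤ (p:ℝ) ^ (γ-2) := by
      have : (p:ℝ) ^ (γ-2) = (p:ℝ) ^ (γ-1) * (p:ℝ)⁻¹ := by
        rw [← Real.rpow_neg_one (p:ℝ), ← Real.rpow_add hp0]; ring_nf
      rw [this]
      apply mul_le_mul_of_nonneg_left _ h₁
      rw [one_div]
      apply inv_anti₀ hp0 (by linarith)
    have hstep : ((p:ℝ) ^ (γ-1) * (1/((p:ℝ)+1))) * (1 - (p:ℝ) ^ (γ-1))⁻¹
        ≤ C * (p:ℝ) ^ (γ-2) := by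
      rw [mul_comm C _]
      exact mul_le_mul hfrac hinv (inv_nonneg.mpr (by linarith))
        (Real.rpow_nonneg hp0.le _)
    linarith
  have hS : Summable (fun n : ℕ => C * (n:ℝ) ^ (γ-2)) :=
    (Real.summable_nat_rpow.mpr (by linarith)).mul_left C
  set B : ℝ := Real.exp (∑' n : ℕ, C * (n:ℝ) ^ (γ-2)) with hBdef
  apply summable_of_sum_range_le (c := Real.exp (∑' n : ℕ, C * (n:ℝ) ^ (γ-2))) (fun n => F9_nonneg γ n)
  intro N
  obtain ⟨hs1, hs2⟩ := EulerProduct.summable_and_hasSum_smoothNumbers_prod_primesBelow_tsum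
    (f := F9 γ) (F9_one γ) (fun {m n} hmn => F9_mul γ h0 hmn) (fun {p} hp => hsum hp) N
  have hind : HasSum (Set.indicator (N.smoothNumbers) (F9 γ))
      (∏ p ∈ N.primesBelow, ∑' n : ℕ, F9 γ (p^n)) :=
    (hasSum_subtype_iff_indicator).mp hs2
  have heq : ∑ i ∈ Finset.range N, F9 γ i
      = ∑ i ∈ Finset.range N, Set.indicator (N.smoothNumbers) (F9 γ) i := by
    refine Finset.sum_congr rfl fun i hi => ?_
    rcases eq_or_ne i 0 with rfl | hi0
    · rw [F9_zero γ h0, Set.indicator_apply_eq_zero.mpr fun h => F9_zero γ h0]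
    · rw [Set.indicator_of_mem]
      rw [Nat.mem_smoothNumbers']
      intro p hp hpd
      exact lt_of_le_of_lt (Nat.le_of_dvd (Nat.pos_of_ne_zero hi0) hpd)
        (Finset.mem_range.mp hi)
  rw [heq]
  have h1' : ∑ i ∈ Finset.range N, Set.indicator (N.smoothNumbers) (F9 γ) i
      ≤ ∏ p ∈ N.primesBelow, ∑' n : ℕ, F9 γ (p^n) := by
    apply sum_le_hasSum _ _ hind
    intro i _
    exact Set.indicator_nonneg (fun j _ => F9_nonneg γ j) i
  refine h1'.trans ?_
  have h2' : ∏ p ∈ N.primesBelow, ∑' n : ℕ, F9 γ (p^n)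
      ≤ ∏ p ∈ N.primesBelow, Real.exp (C * (p:ℝ) ^ (γ-2)) := by
    apply Finset.prod_le_prod
    · intro p hp
      exact tsum_nonneg fun n => F9_nonneg γ _
    · intro p hp
      have hpp := Nat.prime_of_mem_primesBelow hp
      refine (htsum hpp).trans ?_
      have := Real.add_one_le_exp (C * (p:ℝ) ^ (γ-2))
      linarith
  refine h2'.trans ?_
  rw [← Real.exp_sum]
  apply Real.exp_le_exp.mpr
  exact Summable.sum_le_tsum (N.primesBelow)
    (fun n _ => mul_nonneg hCpos.le (Real.rpow_nonneg (Nat.cast_nonneg n) _)) hS
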